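/- arXiv:1803.01055 — 2 statements merged into one kernel-verified Lean document; each statement's English description precedes it below -/
import Mathlib

section
/- Let k ≥ 0 and let w be a k-11-representant of a simple graph G. Then (i) the concatenation r(π(w))·w is a (k+1)-11-representant of G; (ii) the concatenation w·r(σ(w)) is a (k+1)-11-representant of G; and (iii) if k = 0, then the concatenation w·w is a 1-11-representant of G. -/
/-- Number of occurrences of the consecutive pattern 11 in a word,
i.e. the number of positions `i` with `u i = u (i+1)`. -/
def pattern11Count {V : Type*} [DecidableEq V] (u : List V) : ℕ :=
  (u.zip u.tail).countP (fun p => decide (p.1 = p.2))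

/-- `w` is a `k`-11-representant of the simple graph `G`: every vertex occurs in `w`,
and two distinct vertices are adjacent iff the subword of `w` induced by them contains
at most `k` occurrences of the consecutive pattern 11. -/
def IsK11Rep {V : Type*} [DecidableEq V] (G : SimpleGraph V) (k : ℕ) (w : List V) : Prop :=
  (∀ v : V, v ∈ w) ∧
  ∀ x y : V, x ≠ y →
    (G.Adj x y ↔ pattern11Count (w.filter (fun a => decide (a = x ∨ a = y))) ≤ k)

/-- A simple graph is `k`-11-representable if it has a `k`-11-representant. -/
def K11Representable {V : Type*} [DecidableEq V] (G : SimpleGraph V) (k : ℕ) : Prop :=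
  ∃ w : List V, IsK11Rep G k w

/-- A graph is `t`-uniformly `k`-11-representable if it has a `k`-11-representant in which
every vertex occurs exactly `t` times. -/
def UniformK11Rep {V : Type*} [DecidableEq V] (G : SimpleGraph V) (t k : ℕ) : Prop :=
  ∃ w : List V, IsK11Rep G k w ∧ ∀ v : V, w.count v = t

/-- The final permutation `σ(w)`: distinct letters of `w` in order of last occurrence. -/
def finalPerm {V : Type*} [DecidableEq V] (w : List V) : List V := w.dedup

/-- The initial permutation `π(w)`: distinct letters of `w` in order of first occurrence. -/
def initPerm {V : Type*} [DecidableEq V] (w : List V) : List V := (w.reverse.dedup).reverse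

section Aux
open List

variable {V : Type*} [DecidableEq V]

theorem p11_nil : pattern11Count ([] : List V) = 0 := rfl

theorem p11_singleton (x : V) : pattern11Count [x] = 0 := rfl

theorem p11_cons_cons (x y : V) (l : List V) :
    pattern11Count (x :: y :: l) = (if x = y then 1 else 0) + pattern11Count (y :: l) := by
  simp [pattern11Count, List.countP_cons]
  by_cases h : x = y <;> simp [h, Nat.add_comm]

theorem p11_append (a b : List V) (ha : a ≠ []) (hb : b ≠ []) :
    pattern11Count (a ++ b) =
      pattern11Count a + pattern11Count b + (if a.getLast? = b.head? then 1 else 0) := by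
  induction a with
  | nil => simp at ha
  | cons x a ih =>
    cases a with
    | nil =>
      cases b with
      | nil => simp at hb
      | cons y b =>
        simp [p11_cons_cons, p11_singleton]
        by_cases h : x = y <;> simp [h] <;> omega
    | cons z a =>
      have h1 : (z :: a) ++ b = z :: (a ++ b) := rfl
      have := ih (by simp)
      rw [List.cons_append, h1, p11_cons_cons, ← h1, this, p11_cons_cons]
      simp [List.getLast?_cons_cons]
      omega

theorem p11_nodup {l : List V} (h : l.Nodup) : pattern11Count l = 0 := by
  induction l with
  | nil => rfl
  | cons x l ih =>
    cases l with
    | nil => rfl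
    | cons y l =>
      rw [p11_cons_cons]
      have hxy : x ≠ y := by simp_all
      rw [if_neg hxy, ih h.of_cons]

theorem filter_dedup (p : V → Bool) (l : List V) :
    (l.dedup.filter p) = (l.filter p).dedup := by
  induction l with
  | nil => rfl
  | cons a l ih =>
    by_cases hp : p a
    · by_cases hm : a ∈ l
      · rw [List.dedup_cons_of_mem hm, List.filter_cons, if_pos hp,
          List.dedup_cons_of_mem (List.mem_filter.2 ⟨hm, hp⟩), ih]
      · rw [List.dedup_cons_of_notMem hm, List.filter_cons, if_pos hp,
          List.filter_cons, if_pos hp,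
          List.dedup_cons_of_notMem (fun h => hm (List.mem_filter.1 h).1), ih]
    · have hp' : p a = false := by simpa using hp
      by_cases hm : a ∈ l
      · rw [List.dedup_cons_of_mem hm, List.filter_cons, if_neg (by simp [hp']), ih]
      · rw [List.dedup_cons_of_notMem hm, List.filter_cons, if_neg (by simp [hp']),
          List.filter_cons, if_neg (by simp [hp']), ih]

theorem getLast?_dedup (l : List V) : l.dedup.getLast? = l.getLast? := by
  induction l with
  | nil => rfl
  | cons a l ih =>
    cases l with
    | nil => rfl
    | cons b l =>
      by_cases hm : a ∈ b :: l
      · rw [List.dedup_cons_of_mem hm, ih, List.getLast?_cons_cons]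
      · rw [List.dedup_cons_of_notMem hm]
        have hne : (b :: l).dedup ≠ [] := by simp [List.dedup_eq_nil]
        obtain ⟨c, t, hct⟩ := List.exists_cons_of_ne_nil hne
        rw [hct, List.getLast?_cons_cons, ← hct, ih, List.getLast?_cons_cons]

end Aux

section Aux2
variable {V : Type*} [DecidableEq V]

theorem key1 {u : List V} (hu : u ≠ []) :
    pattern11Count (u.reverse.dedup ++ u) = pattern11Count u + 1 := by
  have hd : u.reverse.dedup ≠ [] := by
    simp [List.dedup_eq_nil, hu]
  rw [p11_append _ _ hd hu, p11_nodup (List.nodup_dedup _), getLast?_dedup,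
    List.getLast?_reverse, if_pos rfl]
  omega

theorem key2 {u : List V} (hu : u ≠ []) :
    pattern11Count (u ++ u.dedup.reverse) = pattern11Count u + 1 := by
  have hd : u.dedup.reverse ≠ [] := by
    simp [List.dedup_eq_nil, hu]
  rw [p11_append _ _ hu hd, p11_nodup (List.nodup_reverse.2 (List.nodup_dedup _)),
    List.head?_reverse, getLast?_dedup, if_pos rfl]

theorem filter_initPerm (p : V → Bool) (w : List V) :
    ((initPerm w).reverse ++ w).filter p = (w.filter p).reverse.dedup ++ w.filter p := by
  rw [List.filter_append, initPerm, List.reverse_reverse, filter_dedup,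
    List.filter_reverse]

theorem filter_finalPerm (p : V → Bool) (w : List V) :
    (w ++ (finalPerm w).reverse).filter p = w.filter p ++ (w.filter p).dedup.reverse := by
  rw [List.filter_append, finalPerm, List.filter_reverse, filter_dedup]

end Aux2

/-- if `w` is a `k`-11-representant of `G`, then `r(π(w))·w` and
`w·r(σ(w))` are `(k+1)`-11-representants of `G`, and if `k = 0` then `w·w` is a
`1`-11-representant of `G`. -/
theorem extension_lemma {V : Type*} [DecidableEq V] [Fintype V] (k : ℕ)
    (G : SimpleGraph V) (w : List V) (hw : IsK11Rep G k w) :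
    IsK11Rep G (k + 1) ((initPerm w).reverse ++ w) ∧
    IsK11Rep G (k + 1) (w ++ (finalPerm w).reverse) ∧
    (k = 0 → IsK11Rep G 1 (w ++ w)) := by
  obtain ⟨hmem, hadj⟩ := hw
  have hune : ∀ x y : V, w.filter (fun a => decide (a = x ∨ a = y)) ≠ [] := by
    intro x y
    have : x ∈ w.filter (fun a => decide (a = x ∨ a = y)) :=
      List.mem_filter.2 ⟨hmem x, by simp⟩
    exact List.ne_nil_of_mem this
  refine ⟨⟨fun v => List.mem_append.2 (Or.inr (hmem v)), ?_⟩,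
          ⟨fun v => List.mem_append.2 (Or.inl (hmem v)), ?_⟩,
          fun hk => ⟨fun v => List.mem_append.2 (Or.inl (hmem v)), ?_⟩⟩
  · intro x y hxy
    rw [hadj x y hxy, filter_initPerm, key1 (hune x y)]
    omega
  · intro x y hxy
    rw [hadj x y hxy, filter_finalPerm, key2 (hune x y)]
    omega
  · intro x y hxy
    subst hk
    rw [hadj x y hxy, List.filter_append,
      p11_append _ _ (hune x y) (hune x y)]
    split_ifs <;> omega
end

section
/- Let k ≥ 0 and let G be a simple graph whose vertex set is the disjoint union of two sets V₁ and V₂, with x ∈ V₁ and y ∈ V₂, such that the only edge of G joining a vertex of V₁ to a vertex of V₂ is the edge xy. If the induced subgraphs G[V₁] and G[V₂] are both k-11-representable, then G is k-11-representable. (In other words, connecting two k-11-representable graphs by a single edge yields a k-11-representable graph.) -/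
set_option linter.unusedSectionVars false
set_option linter.unnecessarySeqFocus false
set_option maxHeartbeats 1000000

namespace K11Aux

variable {V : Type*} [DecidableEq V]

/-- junction term -/
def junct (s t : List V) : ℕ :=
  match s.getLast?, t.head? with
  | some a, some b => if a = b then 1 else 0
  | _, _ => 0

@[simp] lemma junct_nil_left (t : List V) : junct [] t = 0 := by
  cases t <;> rfl

@[simp] lemma junct_nil_right (s : List V) : junct s [] = 0 := by
  unfold junct
  cases h : s.getLast? <;> simp

lemma junct_eq_zero {s t : List V} {a b : V} (hs : s.getLast? = some a)
    (ht : t.head? = some b) (hab : a ≠ b) : junct s t = 0 := by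
  unfold junct; rw [hs, ht]; simp [hab]

lemma c11_nil : pattern11Count ([] : List V) = 0 := rfl

lemma c11_singleton (a : V) : pattern11Count [a] = 0 := rfl

lemma c11_cons2 (a b : V) (l : List V) :
    pattern11Count (a :: b :: l) = (if a = b then 1 else 0) + pattern11Count (b :: l) := by
  have : (a :: b :: l).zip (a :: b :: l).tail = (a, b) :: ((b :: l).zip ((b :: l).tail)) := rfl
  rw [pattern11Count, this, List.countP_cons, pattern11Count]
  by_cases h : a = b <;> simp [h] <;> omega

lemma c11_cons (a : V) (u : List V) :
    pattern11Count (a :: u) =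
      (if u.head? = some a then 1 else 0) + pattern11Count u := by
  cases u with
  | nil => simp [pattern11Count]
  | cons b l =>
    rw [c11_cons2]
    congr 1
    simp [eq_comm]

lemma c11_append (s t : List V) :
    pattern11Count (s ++ t) = pattern11Count s + pattern11Count t + junct s t := by
  induction s with
  | nil => simp [c11_nil]
  | cons a s ih =>
    rw [List.cons_append, c11_cons, ih, c11_cons]
    have hkey : (if (s ++ t).head? = some a then 1 else 0) + junct s t
        = (if s.head? = some a then 1 else 0) + junct (a :: s) t := by
      cases s with
      | nil =>
        simp only [List.nil_append, List.head?_nil]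
        cases t with
        | nil => simp
        | cons b t' =>
          simp [junct, eq_comm (a := b) (b := a)]
      | cons c s' =>
        have : junct (a :: c :: s') t = junct (c :: s') t := by
          unfold junct
          rw [List.getLast?_cons_cons]
        simp [this]
    omega

lemma le_c11_append_right (s t : List V) : pattern11Count t ≤ pattern11Count (s ++ t) := by
  rw [c11_append]; omega

lemma le_c11_append_left (s t : List V) : pattern11Count s ≤ pattern11Count (s ++ t) := by
  rw [c11_append]; omega

lemma c11_reverse (u : List V) : pattern11Count u.reverse = pattern11Count u := by
  induction u with
  | nil => rfl
  | cons a u ih =>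
    have hj : junct u.reverse [a] = if u.head? = some a then 1 else 0 := by
      unfold junct
      rw [List.getLast?_reverse]
      cases h : u.head? <;> simp [eq_comm]
    rw [List.reverse_cons, c11_append, ih, hj, c11_singleton, c11_cons]
    omega

lemma c11_map_inj {W : Type*} [DecidableEq W] (f : V → W) (hf : Function.Injective f)
    (u : List V) : pattern11Count (u.map f) = pattern11Count u := by
  induction u with
  | nil => rfl
  | cons a u ih =>
    rw [List.map_cons, c11_cons, c11_cons, ih]
    congr 1
    cases u with
    | nil => simp
    | cons b l => simp [hf.eq_iff]

/-- n-fold repetition -/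
def pow (u : List V) : ℕ → List V
  | 0 => []
  | n + 1 => u ++ pow u n

@[simp] lemma pow_zero (u : List V) : pow u 0 = [] := rfl

lemma pow_succ (u : List V) (n : ℕ) : pow u (n+1) = u ++ pow u n := rfl

lemma filter_pow (p : V → Bool) (u : List V) (n : ℕ) :
    (pow u n).filter p = pow (u.filter p) n := by
  induction n with
  | zero => rfl
  | succ n ih => rw [pow_succ, pow_succ, List.filter_append, ih]

lemma head?_pow {u : List V} (hu : u ≠ []) (n : ℕ) : (pow u (n+1)).head? = u.head? := by
  rw [pow_succ, List.head?_append]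
  cases h : u.head? with
  | none => exact absurd (List.head?_eq_none_iff.1 h) hu
  | some a => simp

lemma getLast?_pow {u : List V} (hu : u ≠ []) (n : ℕ) :
    (pow u (n+1)).getLast? = u.getLast? := by
  induction n with
  | zero => rw [pow_succ, pow_zero, List.append_nil]
  | succ n ih =>
    rw [pow_succ, List.getLast?_append, ih]
    cases h : u.getLast? with
    | none =>
      exact absurd (by simpa using congrArg Option.isSome h) (by simp [hu])
    | some a => simp

lemma c11_pow {u : List V} (h0 : pattern11Count u = 0) (hj : junct u u = 0) (n : ℕ) :
    pattern11Count (pow u n) = 0 := by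
  induction n with
  | zero => rfl
  | succ n ih =>
    rw [pow_succ, c11_append, h0, ih]
    cases n with
    | zero => simp
    | succ m =>
      rcases eq_or_ne u [] with rfl | hu
      · simp
      · have : junct u (pow u (m+1)) = junct u u := by
          unfold junct; rw [head?_pow hu]
        omega

lemma c11_pow_ge (u : List V) (n : ℕ) : n * pattern11Count u ≤ pattern11Count (pow u n) := by
  induction n with
  | zero => simp
  | succ n ih =>
    rw [pow_succ, c11_append, Nat.succ_mul]
    omega

/-- dedup commutes with filter -/
lemma dedup_filter (p : V → Bool) (l : List V) : (l.filter p).dedup = l.dedup.filter p := by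
  induction l with
  | nil => rfl
  | cons a l ih =>
    by_cases hm : a ∈ l
    · rw [List.dedup_cons_of_mem hm]
      by_cases hp : p a
      · rw [List.filter_cons_of_pos hp, List.dedup_cons_of_mem (List.mem_filter.2 ⟨hm, hp⟩), ih]
      · rw [List.filter_cons_of_neg (by simpa using hp), ih]
    · rw [List.dedup_cons_of_notMem hm]
      by_cases hp : p a
      · rw [List.filter_cons_of_pos hp, List.filter_cons_of_pos hp,
          List.dedup_cons_of_notMem (fun hc => hm (List.mem_filter.1 hc).1), ih]
      · rw [List.filter_cons_of_neg (by simpa using hp),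
          List.filter_cons_of_neg (by simpa using hp), ih]

lemma getLast?_cons_ne {a : V} {m : List V} (hm : m ≠ []) :
    (a :: m).getLast? = m.getLast? := by
  rw [show a :: m = [a] ++ m from rfl, List.getLast?_append]
  cases h : m.getLast? with
  | none => exact absurd (List.getLast?_eq_none_iff.1 h) hm
  | some b => simp

lemma getLast?_dedup (l : List V) : l.dedup.getLast? = l.getLast? := by
  induction l with
  | nil => rfl
  | cons a l ih =>
    by_cases hm : a ∈ l
    · rw [List.dedup_cons_of_mem hm, ih, getLast?_cons_ne (List.ne_nil_of_mem hm)]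
    · rw [List.dedup_cons_of_notMem hm]
      rcases eq_or_ne l [] with rfl | hl
      · rfl
      · have hd : l.dedup ≠ [] := by
          simpa [List.dedup_eq_nil] using hl
        rw [getLast?_cons_ne hd, getLast?_cons_ne hl, ih]

lemma getLast?_filter_eq_dedup (p : V → Bool) (l : List V) :
    (l.filter p).getLast? = (l.dedup.filter p).getLast? := by
  rw [← dedup_filter, getLast?_dedup]

/-- the pair predicate -/
def pf (a b : V) : V → Bool := fun c => decide (c = a ∨ c = b)

lemma pf_comm (a b : V) : pf a b = pf b a := by
  funext c
  exact decide_eq_decide.2 or_comm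

@[simp] lemma pf_left (a b : V) : pf a b a = true := by simp [pf]

@[simp] lemma pf_right (a b : V) : pf a b b = true := by simp [pf]

lemma pf_false {c a b : V} (h1 : c ≠ a) (h2 : c ≠ b) : pf a b c = false := by
  simp [pf, h1, h2]

lemma filter_pair_nil {l : List V} {a b : V} (ha : a ∉ l) (hb : b ∉ l) :
    l.filter (pf a b) = [] := by
  rw [List.filter_eq_nil_iff]
  intro c hc
  have h1 : c ≠ a := fun h => ha (h ▸ hc)
  have h2 : c ≠ b := fun h => hb (h ▸ hc)
  simp [pf_false h1 h2]

lemma filter_pair_single {l : List V} {a b : V} (hn : l.Nodup) (ha : a ∈ l) (hb : b ∉ l) :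
    l.filter (pf a b) = [a] := by
  induction l with
  | nil => cases ha
  | cons c l ih =>
    rcases List.nodup_cons.1 hn with ⟨hcl, hn'⟩
    by_cases hc : c = a
    · subst hc
      rw [List.filter_cons_of_pos (by simp)]
      rw [filter_pair_nil hcl (fun h => hb (List.mem_cons_of_mem _ h))]
    · have hca : c ≠ a := hc
      have hcb : c ≠ b := fun h => hb (h ▸ (List.mem_cons_self (a := c) (l := l)))
      rw [List.filter_cons_of_neg (by simp [pf_false hca hcb])]
      exact ih hn' ((List.mem_cons.1 ha).resolve_left (fun h => hc h.symm))
        (fun h => hb (List.mem_cons_of_mem _ h))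

lemma filter_pair_both {l : List V} {a b : V} (hn : l.Nodup) (ha : a ∈ l) (hb : b ∈ l)
    (hab : a ≠ b) :
    l.filter (pf a b) = [a, b] ∨ l.filter (pf a b) = [b, a] := by
  induction l with
  | nil => cases ha
  | cons c l ih =>
    rcases List.nodup_cons.1 hn with ⟨hcl, hn'⟩
    by_cases hca : c = a
    · subst hca
      left
      rw [List.filter_cons_of_pos (by simp)]
      have hbl : b ∈ l := (List.mem_cons.1 hb).resolve_left (fun h => hab h.symm)
      rw [pf_comm, filter_pair_single hn' hbl hcl]
    · by_cases hcb : c = b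
      · subst hcb
        right
        rw [List.filter_cons_of_pos (by simp)]
        have hal : a ∈ l := (List.mem_cons.1 ha).resolve_left (fun h => hca h.symm)
        rw [filter_pair_single hn' hal hcl]
      · rw [List.filter_cons_of_neg (by simp [pf_false hca hcb])]
        exact ih hn' ((List.mem_cons.1 ha).resolve_left (fun h => hca h.symm))
          ((List.mem_cons.1 hb).resolve_left (fun h => hcb h.symm))

lemma c11_pair {a b : V} (hab : a ≠ b) : pattern11Count [a, b] = 0 := by
  rw [c11_cons2]
  simp [hab, c11_singleton]

lemma flatMap_filter_id {l : List V} {f : V → List V} {p : V → Bool}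
    (hf : ∀ c ∈ l, (f c).filter p = [c].filter p) :
    (l.flatMap f).filter p = l.filter p := by
  induction l with
  | nil => rfl
  | cons c l ih =>
    rw [List.flatMap_cons, List.filter_append,
      hf c ((List.mem_cons_self (a := c) (l := l))), ih (fun d hd => hf d (List.mem_cons_of_mem _ hd))]
    by_cases hp : p c
    · rw [List.filter_cons_of_pos hp, List.filter_cons_of_pos hp]
      rfl
    · rw [List.filter_cons_of_neg (by simpa using hp),
        List.filter_cons_of_neg (by simpa using hp)]
      rfl

lemma flatMap_filter_const {l : List V} {f : V → List V} {p : V → Bool} {z : V}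
    (hz : ∀ c ∈ l, c ≠ z → p c = false) :
    ((l.flatMap fun c => if c = z then f c else [c]).filter p)
      = pow ((f z).filter p) (l.count z) := by
  induction l with
  | nil => rfl
  | cons c l ih =>
    rw [List.flatMap_cons, List.filter_append,
      ih (fun d hd hdz => hz d (List.mem_cons_of_mem _ hd) hdz)]
    by_cases hc : c = z
    · subst hc
      rw [if_pos rfl, List.count_cons_self, pow_succ]
    · have hpc : p c = false := hz c ((List.mem_cons_self (a := c) (l := l))) hc
      simp [hc, hpc, List.count_cons, List.filter_cons]

lemma filter_filter_comm (p q : V → Bool) (l : List V) :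
    (l.filter q).filter p = (l.filter p).filter q := by
  rw [List.filter_filter, List.filter_filter]
  exact List.filter_congr (fun c _ => Bool.and_comm _ _)

/-- the "free append" lemma: appending an initial segment of the final permutation
preserves all pair pattern counts. -/
lemma c11_filter_append_dedup {w D₁ D₂ : List V} (hsplit : w.dedup = D₁ ++ D₂)
    {a b : V} (hab : a ≠ b) (ha : a ∈ w) (hb : b ∈ w) :
    pattern11Count ((w ++ D₁).filter (pf a b)) = pattern11Count (w.filter (pf a b)) := by
  have hnd : (D₁ ++ D₂).Nodup := hsplit ▸ w.nodup_dedup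
  have hnd1 : D₁.Nodup := hnd.of_append_left
  have hdisj : ∀ c, c ∈ D₁ → c ∉ D₂ := fun c h1 h2 =>
    (List.disjoint_of_nodup_append hnd) h1 h2
  have hlast : (w.filter (pf a b)).getLast? = ((D₁.filter (pf a b)) ++ (D₂.filter (pf a b))).getLast? := by
    rw [getLast?_filter_eq_dedup, hsplit, List.filter_append]
  have hadd : a ∈ D₁ ++ D₂ := hsplit ▸ List.mem_dedup.2 ha
  have hbdd : b ∈ D₁ ++ D₂ := hsplit ▸ List.mem_dedup.2 hb
  rw [List.filter_append, c11_append]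
  by_cases haD : a ∈ D₁ <;> by_cases hbD : b ∈ D₁
  · -- both in D₁
    have h2' : D₂.filter (pf a b) = [] := filter_pair_nil (hdisj a haD) (hdisj b hbD)
    rcases filter_pair_both hnd1 haD hbD hab with h1 | h1
    · rw [h1, c11_pair hab]
      rw [h1, h2'] at hlast
      have : junct (w.filter (pf a b)) [a, b] = 0 :=
        junct_eq_zero (by rw [hlast]; simp) (by simp) hab.symm
      omega
    · rw [h1, c11_pair hab.symm]
      rw [h1, h2'] at hlast
      have : junct (w.filter (pf a b)) [b, a] = 0 :=
        junct_eq_zero (by rw [hlast]; simp) (by simp) hab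
      omega
  · -- a ∈ D₁, b ∈ D₂
    have hb2 : b ∈ D₂ := (List.mem_append.1 hbdd).resolve_left hbD
    have h1 : D₁.filter (pf a b) = [a] := filter_pair_single hnd1 haD hbD
    have h2 : D₂.filter (pf a b) = [b] := by
      rw [pf_comm]
      exact filter_pair_single hnd.of_append_right hb2 (fun h => hdisj a haD h)
    rw [h1, c11_singleton]
    rw [h1, h2] at hlast
    have : junct (w.filter (pf a b)) [a] = 0 :=
      junct_eq_zero (by rw [hlast]; simp) (by simp) hab.symm
    omega
  · -- b ∈ D₁, a ∈ D₂
    have ha2 : a ∈ D₂ := (List.mem_append.1 hadd).resolve_left haD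
    have h1 : D₁.filter (pf a b) = [b] := by
      rw [pf_comm]
      exact filter_pair_single hnd1 hbD haD
    have h2 : D₂.filter (pf a b) = [a] := filter_pair_single hnd.of_append_right ha2
      (fun h => hdisj b hbD h)
    rw [h1, c11_singleton]
    rw [h1, h2] at hlast
    have : junct (w.filter (pf a b)) [b] = 0 :=
      junct_eq_zero (by rw [hlast]; simp) (by simp) hab
    omega
  · -- neither
    rw [filter_pair_nil haD hbD]
    simp [c11_nil]

lemma c11_sandwich {Af Sf Bf : List V} {eA hS eS hB : V}
    (h1 : Af.getLast? = some eA) (h2 : Sf.head? = some hS) (h3 : Sf.getLast? = some eS)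
    (h4 : Bf.head? = some hB) (ne1 : eA ≠ hS) (ne2 : eS ≠ hB) :
    pattern11Count (Af ++ (Sf ++ Bf)) =
      pattern11Count Af + pattern11Count Sf + pattern11Count Bf := by
  have hh : (Sf ++ Bf).head? = some hS := by
    rw [List.head?_append, h2]; rfl
  rw [c11_append, c11_append, junct_eq_zero h3 h4 ne2, junct_eq_zero h1 hh ne1]
  omega

/-! ### The construction pieces -/

def Lw (u P : List V) (x : V) : List V := u ++ (P ++ [x])

def tw (u P : List V) (x : V) : List V :=
  (Lw u P x).dedup.filter (fun c => decide (¬ c = x))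

def Aw (u P : List V) (x y : V) (m : List V) : List V :=
  (Lw u P x).flatMap (fun c => if c = x then [x, y] ++ m else [c])

lemma getLast?_Lw (u P : List V) (x : V) : (Lw u P x).getLast? = some x := by
  have h1 : (P ++ [x]).getLast? = some x := by
    rw [List.getLast?_append]; rfl
  rw [Lw, List.getLast?_append, h1]; rfl

lemma x_mem_Lw (u P : List V) (x : V) : x ∈ Lw u P x := by
  rw [Lw]; simp

lemma mem_Lw {u P T : List V} {x : V} (hsplit : u.dedup = P ++ x :: T) :
    ∀ c ∈ Lw u P x, c ∈ u ∨ c = x := by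
  intro c hc
  rw [Lw, List.mem_append, List.mem_append] at hc
  rcases hc with h | h | h
  · exact Or.inl h
  · exact Or.inl (List.mem_dedup.1 (hsplit ▸ List.mem_append_left _ h))
  · exact Or.inr (List.mem_singleton.1 h)

lemma subset_Lw (u P : List V) (x : V) : ∀ c ∈ u, c ∈ Lw u P x := by
  intro c hc; rw [Lw]; exact List.mem_append_left _ hc

lemma cnt_Lw {u P T : List V} {x : V} (hsplit : u.dedup = P ++ x :: T)
    {a b : V} (hab : a ≠ b) (ha : a ∈ u) (hb : b ∈ u) :
    pattern11Count ((Lw u P x).filter (pf a b)) = pattern11Count (u.filter (pf a b)) := by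
  have hs : u.dedup = (P ++ [x]) ++ T := by rw [hsplit]; simp
  exact c11_filter_append_dedup hs hab ha hb

lemma nodup_tw (u P : List V) (x : V) : (tw u P x).Nodup :=
  (List.nodup_dedup _).filter _

lemma mem_of_mem_tw {u P : List V} {x c : V} (hc : c ∈ tw u P x) :
    c ∈ Lw u P x ∧ c ≠ x := by
  rw [tw] at hc
  rcases List.mem_filter.1 hc with ⟨h1, h2⟩
  exact ⟨List.mem_dedup.1 h1, by simpa using h2⟩

lemma mem_tw {u P : List V} {x a : V} (ha : a ∈ Lw u P x) (hax : a ≠ x) :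
    a ∈ tw u P x := by
  rw [tw]
  exact List.mem_filter.2 ⟨List.mem_dedup.2 ha, by simpa using hax⟩

lemma eq_append_of_getLast? {l : List V} {x : V} (h : l.getLast? = some x) :
    ∃ M, l = M ++ [x] := by
  induction l with
  | nil => cases h
  | cons a l ih =>
    cases l with
    | nil =>
      refine ⟨[], ?_⟩
      simpa using h
    | cons b l' =>
      rw [List.getLast?_cons_cons] at h
      obtain ⟨M, hM⟩ := ih h
      exact ⟨a :: M, by rw [hM]; rfl⟩

lemma dedup_Lw_pair {u P : List V} {x a : V} (ha : a ∈ Lw u P x) (hax : a ≠ x) :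
    (Lw u P x).dedup.filter (pf a x) = [a, x] := by
  have hlast : (Lw u P x).dedup.getLast? = some x := by
    rw [getLast?_dedup, getLast?_Lw]
  obtain ⟨M, hM⟩ := eq_append_of_getLast? hlast
  have hnd : (M ++ [x]).Nodup := hM ▸ (Lw u P x).nodup_dedup
  have hxM : x ∉ M := fun h => (List.disjoint_of_nodup_append hnd) h (List.mem_singleton_self x)
  have haM : a ∈ M := by
    have : a ∈ M ++ [x] := hM ▸ List.mem_dedup.2 ha
    rcases List.mem_append.1 this with h | h
    · exact h
    · exact absurd (List.mem_singleton.1 h) hax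
  rw [hM, List.filter_append, filter_pair_single hnd.of_append_left haM hxM]
  have : [x].filter (pf a x) = [x] := by
    rw [List.filter_cons_of_pos (pf_right a x)]; rfl
  rw [this]; rfl

lemma tw_pair_x {u P : List V} {x a : V} (ha : a ∈ Lw u P x) (hax : a ≠ x) :
    (tw u P x).filter (pf a x) = [a] := by
  rw [tw, filter_filter_comm, dedup_Lw_pair ha hax]
  rw [List.filter_cons_of_pos (by simp [hax]),
    List.filter_cons_of_neg (by simp)]
  rfl

lemma tw_filter {u P : List V} {x a b : V} (hax : a ≠ x) (hbx : b ≠ x) :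
    (tw u P x).filter (pf a b) = (Lw u P x).dedup.filter (pf a b) := by
  rw [tw, filter_filter_comm]
  apply List.filter_eq_self.2
  intro c hc
  rcases List.mem_filter.1 hc with ⟨_, h2⟩
  have : c = a ∨ c = b := by simpa [pf] using h2
  rcases this with rfl | rfl <;> simpa

lemma Aw_keep {u P : List V} {x y : V} {m : List V} {p : V → Bool}
    (hblock : ([x, y] ++ m).filter p = [x].filter p) :
    (Aw u P x y m).filter p = (Lw u P x).filter p := by
  apply flatMap_filter_id
  intro c _
  by_cases hc : c = x
  · subst hc; rw [if_pos rfl]; exact hblock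
  · rw [if_neg hc]

lemma Aw_pow {u P : List V} {x y : V} {m : List V} {p : V → Bool}
    (hp : ∀ c ∈ Lw u P x, c ≠ x → p c = false) :
    (Aw u P x y m).filter p = pow (([x, y] ++ m).filter p) ((Lw u P x).count x) :=
  flatMap_filter_const hp

lemma mem_Aw {u P : List V} {x y : V} {m : List V} {c : V} (hc : c ∈ Lw u P x) :
    c ∈ Aw u P x y m := by
  rw [Aw]
  rw [List.mem_flatMap]
  refine ⟨c, hc, ?_⟩
  by_cases h : c = x
  · subst h; simp
  · simp [h]

/-! ### small explicit count computations -/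

lemma c11_alt4 {c d : V} (h : c ≠ d) : pattern11Count [c, d, c, d] = 0 := by
  rw [c11_cons2, c11_cons2, c11_cons2, c11_singleton]
  simp [h, h.symm]

lemma c11_aabb {c d : V} (h : c ≠ d) : pattern11Count [c, c, d, d] = 2 := by
  rw [c11_cons2, c11_cons2, c11_cons2, c11_singleton]
  simp [h]

lemma c11_pow_alt4 {c d : V} (h : c ≠ d) (n : ℕ) :
    pattern11Count (pow [c, d, c, d] n) = 0 := by
  apply c11_pow (c11_alt4 h)
  exact junct_eq_zero (by simp) (by simp) (Ne.symm h)

lemma c11_pow_alt2 {c d : V} (h : c ≠ d) (n : ℕ) :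
    pattern11Count (pow [c, d] n) = 0 := by
  apply c11_pow (c11_pair h)
  exact junct_eq_zero (by simp) (by simp) (Ne.symm h)

lemma exact_case {Af Bf : List V} {c d : V} (hcd : c ≠ d) {m : ℕ}
    (hAend : Af.getLast? = some d) (hBhead : Bf.head? = some c) :
    pattern11Count (Af ++ (pow [c, d, c, d] (m + 1) ++ Bf)) =
      pattern11Count Af + pattern11Count Bf := by
  have hne : ([c, d, c, d] : List V) ≠ [] := by simp
  have hh : (pow [c, d, c, d] (m + 1)).head? = some c := by
    rw [head?_pow hne]; rfl
  have hl : (pow [c, d, c, d] (m + 1)).getLast? = some d := by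
    rw [getLast?_pow hne]; simp
  rw [c11_sandwich hAend hh hl hBhead (Ne.symm hcd) (Ne.symm hcd), c11_pow_alt4 hcd]
  omega

lemma filter_single_pos {c : V} {p : V → Bool} (h : p c = true) : [c].filter p = [c] := by
  rw [List.filter_cons_of_pos h]; rfl

lemma filter_single_neg {c : V} {p : V → Bool} (h : p c = false) : [c].filter p = [] := by
  rw [List.filter_cons_of_neg (by simp [h])]; rfl

/-- The key construction lemma. -/
lemma key (k : ℕ) (V₁ V₂ : Set V) (hd : ∀ c, c ∈ V₁ → c ∈ V₂ → False)
    (x y : V) (hx : x ∈ V₁) (hy : y ∈ V₂)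
    (u₁ u₂ : List V)
    (hm₁ : ∀ c ∈ u₁, c ∈ V₁) (hc₁ : ∀ v ∈ V₁, v ∈ u₁)
    (hm₂ : ∀ c ∈ u₂, c ∈ V₂) (hc₂ : ∀ v ∈ V₂, v ∈ u₂) :
    ∃ w : List V,
      (∀ v, v ∈ V₁ ∨ v ∈ V₂ → v ∈ w) ∧
      (∀ a b, a ∈ V₁ → b ∈ V₁ → a ≠ b →
        pattern11Count (w.filter (pf a b)) = pattern11Count (u₁.filter (pf a b))) ∧
      (∀ a b, a ∈ V₂ → b ∈ V₂ → a ≠ b →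
        pattern11Count (w.filter (pf a b)) = pattern11Count (u₂.filter (pf a b))) ∧
      pattern11Count (w.filter (pf x y)) = 0 ∧
      (∀ a b, a ∈ V₁ → b ∈ V₂ → ¬(a = x ∧ b = y) →
        k + 1 ≤ pattern11Count (w.filter (pf a b))) := by
  classical
  set u₂' := u₂.reverse with hu2'
  have hm₂' : ∀ c ∈ u₂', c ∈ V₂ := fun c hc => hm₂ c (List.mem_reverse.1 hc)
  have hc₂' : ∀ v ∈ V₂, v ∈ u₂' := fun v hv => List.mem_reverse.2 (hc₂ v hv)
  obtain ⟨P₁, T₁, hsp₁⟩ := List.append_of_mem (List.mem_dedup.2 (hc₁ x hx))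
  obtain ⟨P₂, T₂, hsp₂⟩ := List.append_of_mem (List.mem_dedup.2 (hc₂' y hy))
  set L1 := Lw u₁ P₁ x with hL1def
  set t1 := tw u₁ P₁ x with ht1def
  set C2 := Lw u₂' P₂ y with hC2def
  set t2' := tw u₂' P₂ y with ht2'def
  set t2 := t2'.reverse with ht2def
  set A := Aw u₁ P₁ x y t2 with hAdef
  set Y := Aw u₂' P₂ y x t1.reverse with hYdef
  set B := Y.reverse with hBdef
  set U := t1 ++ ([x] ++ (t1 ++ ([y, x] ++ (t2 ++ ([y] ++ t2))))) with hUdef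
  set S := pow U (k + 1) with hSdef
  -- basic membership facts
  have hxy : x ≠ y := fun h => hd x hx (h ▸ hy)
  have memL1 : ∀ c ∈ L1, c ∈ V₁ := by
    intro c hc
    rcases mem_Lw hsp₁ c hc with h | rfl
    · exact hm₁ c h
    · exact hx
  have memC2 : ∀ c ∈ C2, c ∈ V₂ := by
    intro c hc
    rcases mem_Lw hsp₂ c hc with h | rfl
    · exact hm₂' c h
    · exact hy
  have covL1 : ∀ v ∈ V₁, v ∈ L1 := fun v hv => subset_Lw _ _ _ v (hc₁ v hv)
  have covC2 : ∀ v ∈ V₂, v ∈ C2 := fun v hv => subset_Lw _ _ _ v (hc₂' v hv)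
  have memt1 : ∀ c ∈ t1, c ∈ V₁ ∧ c ≠ x :=
    fun c hc => ⟨memL1 c (mem_of_mem_tw hc).1, (mem_of_mem_tw hc).2⟩
  have memt2 : ∀ c ∈ t2, c ∈ V₂ ∧ c ≠ y := by
    intro c hc
    have hc' : c ∈ t2' := List.mem_reverse.1 hc
    exact ⟨memC2 c (mem_of_mem_tw hc').1, (mem_of_mem_tw hc').2⟩
  have covt1 : ∀ v, v ∈ V₁ → v ≠ x → v ∈ t1 := fun v hv hvx => mem_tw (covL1 v hv) hvx
  have covt2 : ∀ v, v ∈ V₂ → v ≠ y → v ∈ t2 :=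
    fun v hv hvy => List.mem_reverse.2 (mem_tw (covC2 v hv) hvy)
  obtain ⟨n₁, hn₁⟩ : ∃ n, L1.count x = n + 1 :=
    ⟨_, (Nat.succ_pred_eq_of_pos (List.count_pos_iff.2 (x_mem_Lw u₁ P₁ x))).symm⟩
  obtain ⟨n₂, hn₂⟩ : ∃ n, C2.count y = n + 1 :=
    ⟨_, (Nat.succ_pred_eq_of_pos (List.count_pos_iff.2 (x_mem_Lw u₂' P₂ y))).symm⟩
  have hnt1 : (t1 : List V).Nodup := nodup_tw _ _ _
  have hnt2 : (t2 : List V).Nodup := List.nodup_reverse.2 (nodup_tw _ _ _)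
  -- A-block keeps V₁-pairs
  have hblock1 : ∀ a b : V, a ∈ V₁ → b ∈ V₁ →
      ([x, y] ++ t2).filter (pf a b) = [x].filter (pf a b) := by
    intro a b ha hb
    have hyf : pf a b y = false :=
      pf_false (fun h => hd a ha (h ▸ hy)) (fun h => hd b hb (h ▸ hy))
    have ht2f : t2.filter (pf a b) = [] :=
      filter_pair_nil (fun hmem => hd a ha (memt2 _ hmem).1)
        (fun hmem => hd b hb (memt2 _ hmem).1)
    have e : ([x, y] ++ t2).filter (pf a b)
        = [x].filter (pf a b) ++ ([y].filter (pf a b) ++ t2.filter (pf a b)) := by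
      rw [← List.filter_append, ← List.filter_append]
      rfl
    rw [e, ht2f, filter_single_neg hyf]
    simp
  have hAkeep1 : ∀ a b : V, a ∈ V₁ → b ∈ V₁ →
      A.filter (pf a b) = L1.filter (pf a b) :=
    fun a b ha hb => Aw_keep (hblock1 a b ha hb)
  -- Y-block keeps V₂-pairs
  have hblock2 : ∀ a b : V, a ∈ V₂ → b ∈ V₂ →
      ([y, x] ++ t1.reverse).filter (pf a b) = [y].filter (pf a b) := by
    intro a b ha hb
    have hxf : pf a b x = false :=
      pf_false (fun h => hd a (h ▸ hx) ha) (fun h => hd b (h ▸ hx) hb)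
    have ht1f : t1.reverse.filter (pf a b) = [] := by
      rw [List.filter_reverse,
        filter_pair_nil (fun hmem => hd a (memt1 _ hmem).1 ha)
          (fun hmem => hd b (memt1 _ hmem).1 hb)]
      rfl
    have e : ([y, x] ++ t1.reverse).filter (pf a b)
        = [y].filter (pf a b) ++ ([x].filter (pf a b) ++ t1.reverse.filter (pf a b)) := by
      rw [← List.filter_append, ← List.filter_append]
      rfl
    rw [e, ht1f, filter_single_neg hxf]
    simp
  have hYkeep2 : ∀ a b : V, a ∈ V₂ → b ∈ V₂ →
      Y.filter (pf a b) = C2.filter (pf a b) :=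
    fun a b ha hb => Aw_keep (hblock2 a b ha hb)
  have hflip : ∀ p : V → Bool,
      pattern11Count (u₂'.filter p) = pattern11Count (u₂.filter p) := by
    intro p
    rw [hu2', List.filter_reverse, c11_reverse]
  -- ================== case (a, x), a ∈ V₁ \ {x} ==================
  have Hax : ∀ a, a ∈ V₁ → a ≠ x →
      pattern11Count ((A ++ (S ++ B)).filter (pf a x))
        = pattern11Count (u₁.filter (pf a x)) := by
    intro a ha hax
    have hyfa : pf a x y = false :=
      pf_false (fun h => hd a ha (h ▸ hy)) (fun h => hxy (h.symm))
    have hafilter : A.filter (pf a x) = L1.filter (pf a x) := hAkeep1 a x ha hx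
    have hAend : (A.filter (pf a x)).getLast? = some x := by
      rw [hafilter, getLast?_filter_eq_dedup, dedup_Lw_pair (covL1 a ha) hax]
      rfl
    have ht1f : t1.filter (pf a x) = [a] := tw_pair_x (covL1 a ha) hax
    have ht2f : t2.filter (pf a x) = [] :=
      filter_pair_nil (fun hmem => hd a ha (memt2 _ hmem).1)
        (fun hmem => hd x hx (memt2 _ hmem).1)
    have hUf : U.filter (pf a x) = [a, x, a, x] := by
      rw [hUdef]
      simp only [List.filter_append]
      rw [ht1f, ht2f, filter_single_pos (pf_right a x), filter_single_neg hyfa,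
        show ([y, x] : List V).filter (pf a x) = [x] by
          rw [show ([y, x] : List V) = [y] ++ [x] from rfl, List.filter_append,
            filter_single_neg hyfa, filter_single_pos (pf_right a x)]
          rfl]
      simp
    have hSf : S.filter (pf a x) = pow [a, x, a, x] (k + 1) := by
      rw [hSdef, filter_pow, hUf]
    have hYf : Y.filter (pf a x) = pow [x, a] (n₂ + 1) := by
      rw [hYdef, Aw_pow (fun c hc hcy => pf_false
        (show c ≠ a from fun h => hd a ha (h ▸ (memC2 c hc)))
        (show c ≠ x from fun h => hd x hx (h ▸ (memC2 c hc))) ), hn₂]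
      congr 1
      rw [show [y, x] ++ t1.reverse = [y] ++ ([x] ++ t1.reverse) from rfl,
        List.filter_append, List.filter_append, filter_single_neg hyfa,
        filter_single_pos (pf_right a x), List.filter_reverse, ht1f]
      rfl
    have hBhead : (B.filter (pf a x)).head? = some a := by
      rw [hBdef, List.filter_reverse, List.head?_reverse, hYf,
        getLast?_pow (by simp)]
      simp
    have hBc11 : pattern11Count (B.filter (pf a x)) = 0 := by
      rw [hBdef, List.filter_reverse, c11_reverse, hYf, c11_pow_alt2 (Ne.symm hax)]
    rw [List.filter_append, List.filter_append, hSf,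
      exact_case hax hAend hBhead, hafilter,
      cnt_Lw hsp₁ hax (hc₁ a ha) (hc₁ x hx), hBc11]
    omega
  -- ================== generic V₁ pair, both ≠ x ==================
  have Hgen1 : ∀ a b, a ∈ V₁ → b ∈ V₁ → a ≠ b → a ≠ x → b ≠ x →
      L1.dedup.filter (pf a b) = [a, b] →
      pattern11Count ((A ++ (S ++ B)).filter (pf a b))
        = pattern11Count (u₁.filter (pf a b)) := by
    intro a b ha hb hab hax hbx hdd
    have hxf : pf a b x = false :=
      pf_false (fun h => hax h.symm) (fun h => hbx h.symm)
    have hyf : pf a b y = false :=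
      pf_false (fun h => hd a ha (h ▸ hy)) (fun h => hd b hb (h ▸ hy))
    have hafilter : A.filter (pf a b) = L1.filter (pf a b) := hAkeep1 a b ha hb
    have hAend : (A.filter (pf a b)).getLast? = some b := by
      rw [hafilter, getLast?_filter_eq_dedup, hdd]
      rfl
    have ht1f : t1.filter (pf a b) = [a, b] := by
      rw [ht1def, tw_filter hax hbx, ← hL1def, hdd]
    have ht2f : t2.filter (pf a b) = [] :=
      filter_pair_nil (fun hmem => hd a ha (memt2 _ hmem).1)
        (fun hmem => hd b hb (memt2 _ hmem).1)
    have hUf : U.filter (pf a b) = [a, b, a, b] := by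
      rw [hUdef]
      simp only [List.filter_append]
      rw [ht1f, ht2f, filter_single_neg hxf, filter_single_neg hyf,
        show ([y, x] : List V).filter (pf a b) = [] by
          rw [show ([y, x] : List V) = [y] ++ [x] from rfl, List.filter_append,
            filter_single_neg hyf, filter_single_neg hxf]
          rfl]
      simp
    have hSf : S.filter (pf a b) = pow [a, b, a, b] (k + 1) := by
      rw [hSdef, filter_pow, hUf]
    have hYf : Y.filter (pf a b) = pow [b, a] (n₂ + 1) := by
      rw [hYdef, Aw_pow (fun c hc hcy => pf_false
        (show c ≠ a from fun h => hd a ha (h ▸ (memC2 c hc)))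
        (show c ≠ b from fun h => hd b hb (h ▸ (memC2 c hc))) ), hn₂]
      congr 1
      rw [show [y, x] ++ t1.reverse = [y] ++ ([x] ++ t1.reverse) from rfl,
        List.filter_append, List.filter_append, filter_single_neg hyf,
        filter_single_neg hxf, List.filter_reverse, ht1f]
      rfl
    have hBhead : (B.filter (pf a b)).head? = some a := by
      rw [hBdef, List.filter_reverse, List.head?_reverse, hYf,
        getLast?_pow (by simp)]
      simp
    have hBc11 : pattern11Count (B.filter (pf a b)) = 0 := by
      rw [hBdef, List.filter_reverse, c11_reverse, hYf, c11_pow_alt2 (Ne.symm hab)]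
    rw [List.filter_append, List.filter_append, hSf,
      exact_case hab hAend hBhead, hafilter,
      cnt_Lw hsp₁ hab (hc₁ a ha) (hc₁ b hb), hBc11]
    omega
  -- ================== case (b, y), b ∈ V₂ \ {y} ==================
  have Hby : ∀ b, b ∈ V₂ → b ≠ y →
      pattern11Count ((A ++ (S ++ B)).filter (pf b y))
        = pattern11Count (u₂.filter (pf b y)) := by
    intro b hb hby
    have hxfb : pf b y x = false :=
      pf_false (fun h => hd b (h ▸ hx) hb) (fun h => hxy h)
    have hyfilter : Y.filter (pf b y) = C2.filter (pf b y) := hYkeep2 b y hb hy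
    have hYend : (Y.filter (pf b y)).getLast? = some y := by
      rw [hyfilter, getLast?_filter_eq_dedup, dedup_Lw_pair (covC2 b hb) hby]
      rfl
    have hBhead : (B.filter (pf b y)).head? = some y := by
      rw [hBdef, List.filter_reverse, List.head?_reverse, hYend]
    have hBc11 : pattern11Count (B.filter (pf b y)) = pattern11Count (u₂.filter (pf b y)) := by
      rw [hBdef, List.filter_reverse, c11_reverse, hyfilter,
        cnt_Lw hsp₂ hby (hc₂' b hb) (hc₂' y hy), hflip]
    have ht2f : t2.filter (pf b y) = [b] := by
      rw [ht2def, List.filter_reverse, ht2'def, tw_pair_x (covC2 b hb) hby]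
      rfl
    have ht1f : t1.filter (pf b y) = [] :=
      filter_pair_nil (fun hmem => hd b (memt1 _ hmem).1 hb)
        (fun hmem => hd y (memt1 _ hmem).1 hy)
    have hUf : U.filter (pf b y) = [y, b, y, b] := by
      rw [hUdef]
      simp only [List.filter_append]
      rw [ht1f, ht2f, filter_single_neg hxfb, filter_single_pos (pf_right b y),
        show ([y, x] : List V).filter (pf b y) = [y] by
          rw [show ([y, x] : List V) = [y] ++ [x] from rfl, List.filter_append,
            filter_single_pos (pf_right b y), filter_single_neg hxfb]
          rfl]
      simp
    have hSf : S.filter (pf b y) = pow [y, b, y, b] (k + 1) := by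
      rw [hSdef, filter_pow, hUf]
    have hAf : A.filter (pf b y) = pow [y, b] (n₁ + 1) := by
      rw [hAdef, Aw_pow (fun c hc hcx => pf_false
        (show c ≠ b from fun h => hd b (h ▸ (memL1 c hc)) hb)
        (show c ≠ y from fun h => hd y (h ▸ (memL1 c hc)) hy) ), hn₁]
      congr 1
      rw [show [x, y] ++ t2 = [x] ++ ([y] ++ t2) from rfl,
        List.filter_append, List.filter_append, filter_single_neg hxfb,
        filter_single_pos (pf_right b y), ht2f]
      rfl
    have hAend : (A.filter (pf b y)).getLast? = some b := by
      rw [hAf, getLast?_pow (by simp)]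
      simp
    have hAc11 : pattern11Count (A.filter (pf b y)) = 0 := by
      rw [hAf, c11_pow_alt2 (Ne.symm hby)]
    rw [List.filter_append, List.filter_append, hSf,
      exact_case (Ne.symm hby) hAend hBhead, hAc11, hBc11]
    omega
  -- ================== generic V₂ pair, both ≠ y ==================
  have Hgen2 : ∀ a b, a ∈ V₂ → b ∈ V₂ → a ≠ b → a ≠ y → b ≠ y →
      C2.dedup.filter (pf a b) = [a, b] →
      pattern11Count ((A ++ (S ++ B)).filter (pf a b))
        = pattern11Count (u₂.filter (pf a b)) := by
    intro a b ha hb hab hay hby hdd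
    have hxf : pf a b x = false :=
      pf_false (fun h => hd a (h ▸ hx) ha) (fun h => hd b (h ▸ hx) hb)
    have hyf : pf a b y = false :=
      pf_false (fun h => hay h.symm) (fun h => hby h.symm)
    have hyfilter : Y.filter (pf a b) = C2.filter (pf a b) := hYkeep2 a b ha hb
    have hYend : (Y.filter (pf a b)).getLast? = some b := by
      rw [hyfilter, getLast?_filter_eq_dedup, hdd]
      rfl
    have hBhead : (B.filter (pf a b)).head? = some b := by
      rw [hBdef, List.filter_reverse, List.head?_reverse, hYend]
    have hBc11 : pattern11Count (B.filter (pf a b)) = pattern11Count (u₂.filter (pf a b)) := by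
      rw [hBdef, List.filter_reverse, c11_reverse, hyfilter,
        cnt_Lw hsp₂ hab (hc₂' a ha) (hc₂' b hb), hflip]
    have ht2f : t2.filter (pf a b) = [b, a] := by
      rw [ht2def, List.filter_reverse, ht2'def, tw_filter hay hby, ← hC2def, hdd]
      rfl
    have ht1f : t1.filter (pf a b) = [] :=
      filter_pair_nil (fun hmem => hd a (memt1 _ hmem).1 ha)
        (fun hmem => hd b (memt1 _ hmem).1 hb)
    have hUf : U.filter (pf a b) = [b, a, b, a] := by
      rw [hUdef]
      simp only [List.filter_append]
      rw [ht1f, ht2f, filter_single_neg hxf, filter_single_neg hyf,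
        show ([y, x] : List V).filter (pf a b) = [] by
          rw [show ([y, x] : List V) = [y] ++ [x] from rfl, List.filter_append,
            filter_single_neg hyf, filter_single_neg hxf]
          rfl]
      simp
    have hSf : S.filter (pf a b) = pow [b, a, b, a] (k + 1) := by
      rw [hSdef, filter_pow, hUf]
    have hAf : A.filter (pf a b) = pow [b, a] (n₁ + 1) := by
      rw [hAdef, Aw_pow (fun c hc hcx => pf_false
        (show c ≠ a from fun h => hd a (h ▸ (memL1 c hc)) ha)
        (show c ≠ b from fun h => hd b (h ▸ (memL1 c hc)) hb) ), hn₁]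
      congr 1
      rw [show [x, y] ++ t2 = [x] ++ ([y] ++ t2) from rfl,
        List.filter_append, List.filter_append, filter_single_neg hxf,
        filter_single_neg hyf, ht2f]
      rfl
    have hAend : (A.filter (pf a b)).getLast? = some a := by
      rw [hAf, getLast?_pow (by simp)]
      simp
    have hAc11 : pattern11Count (A.filter (pf a b)) = 0 := by
      rw [hAf, c11_pow_alt2 (Ne.symm hab)]
    rw [List.filter_append, List.filter_append, hSf,
      exact_case (Ne.symm hab) hAend hBhead, hAc11, hBc11]
    omega
  -- ================== the pair (x, y) ==================
  have Hxy : pattern11Count ((A ++ (S ++ B)).filter (pf x y)) = 0 := by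
    have ht1f : t1.filter (pf x y) = [] :=
      filter_pair_nil (fun hmem => (memt1 _ hmem).2 rfl)
        (fun hmem => hd y (memt1 _ hmem).1 hy)
    have ht2f : t2.filter (pf x y) = [] :=
      filter_pair_nil (fun hmem => hd x hx (memt2 _ hmem).1)
        (fun hmem => (memt2 _ hmem).2 rfl)
    have hAf : A.filter (pf x y) = pow [x, y] (n₁ + 1) := by
      rw [hAdef, Aw_pow (fun c hc hcx => pf_false hcx
        (show c ≠ y from fun h => hd c (memL1 c hc) (by rw [h]; exact hy)) ), hn₁]
      congr 1
      rw [show [x, y] ++ t2 = [x] ++ ([y] ++ t2) from rfl,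
        List.filter_append, List.filter_append, filter_single_pos (pf_left x y),
        filter_single_pos (pf_right x y), ht2f]
      rfl
    have hYf : Y.filter (pf x y) = pow [y, x] (n₂ + 1) := by
      rw [hYdef, Aw_pow (fun c hc hcy => pf_false
        (show c ≠ x from fun h => hd x hx (h ▸ (memC2 c hc)))
        hcy ), hn₂]
      congr 1
      rw [show [y, x] ++ t1.reverse = [y] ++ ([x] ++ t1.reverse) from rfl,
        List.filter_append, List.filter_append, filter_single_pos (pf_right x y),
        filter_single_pos (pf_left x y), List.filter_reverse, ht1f]
      rfl
    have hUf : U.filter (pf x y) = [x, y, x, y] := by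
      rw [hUdef]
      simp only [List.filter_append]
      rw [ht1f, ht2f, filter_single_pos (pf_left x y), filter_single_pos (pf_right x y),
        show ([y, x] : List V).filter (pf x y) = [y, x] by
          rw [show ([y, x] : List V) = [y] ++ [x] from rfl, List.filter_append,
            filter_single_pos (pf_right x y), filter_single_pos (pf_left x y)]]
      simp
    have hSf : S.filter (pf x y) = pow [x, y, x, y] (k + 1) := by
      rw [hSdef, filter_pow, hUf]
    have hAend : (A.filter (pf x y)).getLast? = some y := by
      rw [hAf, getLast?_pow (by simp)]
      simp
    have hAc11 : pattern11Count (A.filter (pf x y)) = 0 := by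
      rw [hAf, c11_pow_alt2 hxy]
    have hBhead : (B.filter (pf x y)).head? = some x := by
      rw [hBdef, List.filter_reverse, List.head?_reverse, hYf,
        getLast?_pow (by simp)]
      simp
    have hBc11 : pattern11Count (B.filter (pf x y)) = 0 := by
      rw [hBdef, List.filter_reverse, c11_reverse, hYf, c11_pow_alt2 (Ne.symm hxy)]
    rw [List.filter_append, List.filter_append, hSf,
      exact_case hxy hAend hBhead, hAc11, hBc11]
  -- ================== cross pairs: lower bound ==================
  have Hcross : ∀ a b, a ∈ V₁ → b ∈ V₂ → ¬(a = x ∧ b = y) →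
      k + 1 ≤ pattern11Count ((A ++ (S ++ B)).filter (pf a b)) := by
    intro a b ha hb hne
    have hab : a ≠ b := fun h => hd a ha (h ▸ hb)
    have hUf2 : 2 ≤ pattern11Count (U.filter (pf a b)) := by
      by_cases hax : a = x
      · have hby : b ≠ y := fun h => hne ⟨hax, h⟩
        have hpt : pf a b x = true := decide_eq_true (Or.inl hax.symm)
        have hyf : pf a b y = false :=
          pf_false (fun h => hd a ha (h ▸ hy)) (fun h => hby h.symm)
        have ht1f : t1.filter (pf a b) = [] :=
          filter_pair_nil (fun hmem => (memt1 _ hmem).2 hax)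
            (fun hmem => hd b (memt1 _ hmem).1 hb)
        have ht2f : t2.filter (pf a b) = [b] := by
          rw [pf_comm]
          exact filter_pair_single hnt2 (covt2 b hb hby)
            (fun hmem => hd a ha (memt2 _ hmem).1)
        have hxb : x ≠ b := fun h => hd x hx (h ▸ hb)
        have hUf : U.filter (pf a b) = [x, x, b, b] := by
          rw [hUdef]
          simp only [List.filter_append]
          rw [ht1f, ht2f, filter_single_pos hpt, filter_single_neg hyf,
            show ([y, x] : List V).filter (pf a b) = [x] by
              rw [show ([y, x] : List V) = [y] ++ [x] from rfl, List.filter_append,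
                filter_single_neg hyf, filter_single_pos hpt]
              rfl]
          simp
        rw [hUf, c11_aabb hxb]
      · by_cases hby : b = y
        · have hpt : pf a b y = true := decide_eq_true (Or.inr hby.symm)
          have hay : a ≠ y := fun h => hd a ha (h ▸ hy)
          have ht1f : t1.filter (pf a b) = [a] :=
            filter_pair_single hnt1 (covt1 a ha hax)
              (fun hmem => hd b (memt1 _ hmem).1 hb)
          have ht2f : t2.filter (pf a b) = [] :=
            filter_pair_nil (fun hmem => hd a ha (memt2 _ hmem).1)
              (fun hmem => (memt2 _ hmem).2 hby)
          have hxf : pf a b x = false :=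
            pf_false (fun h => hax h.symm) (fun h => hd b (h ▸ hx) hb)
          have hUf : U.filter (pf a b) = [a, a, y, y] := by
            rw [hUdef]
            simp only [List.filter_append]
            rw [ht1f, ht2f, filter_single_neg hxf, filter_single_pos hpt,
              show ([y, x] : List V).filter (pf a b) = [y] by
                rw [show ([y, x] : List V) = [y] ++ [x] from rfl, List.filter_append,
                  filter_single_pos hpt, filter_single_neg hxf]
                rfl]
            simp
          rw [hUf, c11_aabb hay]
        · have ht1f : t1.filter (pf a b) = [a] :=
            filter_pair_single hnt1 (covt1 a ha hax)
              (fun hmem => hd b (memt1 _ hmem).1 hb)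
          have ht2f : t2.filter (pf a b) = [b] := by
            rw [pf_comm]
            exact filter_pair_single hnt2 (covt2 b hb hby)
              (fun hmem => hd a ha (memt2 _ hmem).1)
          have hxf : pf a b x = false :=
            pf_false (fun h => hax h.symm) (fun h => hd b (h ▸ hx) hb)
          have hyf : pf a b y = false :=
            pf_false (fun h => hd a ha (h ▸ hy)) (fun h => hby h.symm)
          have hUf : U.filter (pf a b) = [a, a, b, b] := by
            rw [hUdef]
            simp only [List.filter_append]
            rw [ht1f, ht2f, filter_single_neg hxf, filter_single_neg hyf,
              show ([y, x] : List V).filter (pf a b) = [] by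
                rw [show ([y, x] : List V) = [y] ++ [x] from rfl, List.filter_append,
                  filter_single_neg hyf, filter_single_neg hxf]
                rfl]
            simp
          rw [hUf, c11_aabb hab]
    have hS2 : 2 * (k + 1) ≤ pattern11Count (S.filter (pf a b)) := by
      rw [hSdef, filter_pow]
      calc 2 * (k + 1) = (k + 1) * 2 := by ring
      _ ≤ (k + 1) * pattern11Count (U.filter (pf a b)) := by
          exact Nat.mul_le_mul_left _ hUf2
      _ ≤ pattern11Count (pow (U.filter (pf a b)) (k + 1)) := c11_pow_ge _ _
    calc k + 1 ≤ 2 * (k + 1) := by omega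
    _ ≤ pattern11Count (S.filter (pf a b)) := hS2
    _ ≤ pattern11Count (S.filter (pf a b) ++ B.filter (pf a b)) := le_c11_append_left _ _
    _ ≤ pattern11Count (A.filter (pf a b) ++ (S.filter (pf a b) ++ B.filter (pf a b))) :=
        le_c11_append_right _ _
    _ = pattern11Count ((A ++ (S ++ B)).filter (pf a b)) := by
        rw [List.filter_append, List.filter_append]
  -- ================== assemble ==================
  refine ⟨A ++ (S ++ B), ?_, ?_, ?_, Hxy, Hcross⟩
  · intro v hv
    rcases hv with hv | hv
    · exact List.mem_append_left _ (mem_Aw (covL1 v hv))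
    · refine List.mem_append_right _ (List.mem_append_right _ ?_)
      rw [hBdef]
      exact List.mem_reverse.2 (mem_Aw (covC2 v hv))
  · intro a b ha hb hab
    by_cases hbx : b = x
    · subst hbx
      exact Hax a ha hab
    · by_cases hax : a = x
      · subst hax
        rw [pf_comm]
        exact Hax b hb hbx
      · rcases filter_pair_both (L1.nodup_dedup) (List.mem_dedup.2 (covL1 a ha))
          (List.mem_dedup.2 (covL1 b hb)) hab with hdd | hdd
        · exact Hgen1 a b ha hb hab hax hbx hdd
        · rw [pf_comm]
          exact Hgen1 b a hb ha hab.symm hbx hax (by rw [pf_comm b a]; exact hdd)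
  · intro a b ha hb hab
    by_cases hby : b = y
    · subst hby
      exact Hby a ha hab
    · by_cases hay : a = y
      · subst hay
        rw [pf_comm]
        exact Hby b hb hby
      · rcases filter_pair_both (C2.nodup_dedup) (List.mem_dedup.2 (covC2 a ha))
          (List.mem_dedup.2 (covC2 b hb)) hab with hdd | hdd
        · exact Hgen2 a b ha hb hab hay hby hdd
        · rw [pf_comm]
          exact Hgen2 b a hb ha hab.symm hby hay (by rw [pf_comm b a]; exact hdd)


lemma cnt_transfer {S : Set V} (w : List ↥S) (a b : ↥S) :
    pattern11Count ((w.map Subtype.val).filter (pf (a : V) (b : V)))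
      = pattern11Count (w.filter (fun s => decide (s = a ∨ s = b))) := by
  rw [List.filter_map, c11_map_inj _ Subtype.val_injective]
  congr 1
  apply List.filter_congr
  intro s _
  show pf (a : V) (b : V) (s : V) = decide (s = a ∨ s = b)
  simp [pf, Subtype.ext_iff]

end K11Aux

open K11Aux

/-- connecting two `k`-11-representable graphs by a single edge yields a
`k`-11-representable graph. -/
theorem k11Representable_connect_edge {V : Type*} [DecidableEq V] [Fintype V] (k : ℕ)
    (G : SimpleGraph V) (V₁ V₂ : Set V) (x y : V)
    (hunion : V₁ ∪ V₂ = Set.univ) (hdisj : Disjoint V₁ V₂)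
    (hx : x ∈ V₁) (hy : y ∈ V₂) (hxy : G.Adj x y)
    (hsep : ∀ a ∈ V₁, ∀ b ∈ V₂, G.Adj a b → a = x ∧ b = y)
    (h1 : K11Representable (G.induce V₁) k) (h2 : K11Representable (G.induce V₂) k) :
    K11Representable G k := by
  classical
  obtain ⟨w1, hcov1, hadj1⟩ := h1
  obtain ⟨w2, hcov2, hadj2⟩ := h2
  set u₁ := w1.map (Subtype.val) with hu₁
  set u₂ := w2.map (Subtype.val) with hu₂
  have hm₁ : ∀ c ∈ u₁, c ∈ V₁ := by
    intro c hc
    rcases List.mem_map.1 hc with ⟨s, _, rfl⟩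
    exact s.2
  have hm₂ : ∀ c ∈ u₂, c ∈ V₂ := by
    intro c hc
    rcases List.mem_map.1 hc with ⟨s, _, rfl⟩
    exact s.2
  have hc₁ : ∀ v ∈ V₁, v ∈ u₁ := fun v hv => List.mem_map.2 ⟨⟨v, hv⟩, hcov1 _, rfl⟩
  have hc₂ : ∀ v ∈ V₂, v ∈ u₂ := fun v hv => List.mem_map.2 ⟨⟨v, hv⟩, hcov2 _, rfl⟩
  have hd : ∀ c, c ∈ V₁ → c ∈ V₂ → False := fun c h1 h2 => Set.disjoint_left.1 hdisj h1 h2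
  obtain ⟨w, hwcov, hw1, hw2, hwxy, hwcross⟩ :=
    key k V₁ V₂ hd x y hx hy u₁ u₂ hm₁ hc₁ hm₂ hc₂
  have memVV : ∀ v : V, v ∈ V₁ ∨ v ∈ V₂ := by
    intro v
    have hv : v ∈ V₁ ∪ V₂ := by rw [hunion]; trivial
    exact hv
  -- adjacency within V₁
  have adj1 : ∀ a b : V, (ha : a ∈ V₁) → (hb : b ∈ V₁) → a ≠ b →
      (G.Adj a b ↔ pattern11Count (w.filter (pf a b)) ≤ k) := by
    intro a b ha hb hab
    have hne : (⟨a, ha⟩ : ↥V₁) ≠ ⟨b, hb⟩ := fun h => hab (congrArg Subtype.val h)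
    have e1 := hadj1 ⟨a, ha⟩ ⟨b, hb⟩ hne
    have e2 : (G.induce V₁).Adj ⟨a, ha⟩ ⟨b, hb⟩ ↔ G.Adj a b := SimpleGraph.comap_adj
    rw [e2] at e1
    rw [hw1 a b ha hb hab, hu₁, cnt_transfer w1 ⟨a, ha⟩ ⟨b, hb⟩]
    exact e1
  have adj2 : ∀ a b : V, (ha : a ∈ V₂) → (hb : b ∈ V₂) → a ≠ b →
      (G.Adj a b ↔ pattern11Count (w.filter (pf a b)) ≤ k) := by
    intro a b ha hb hab
    have hne : (⟨a, ha⟩ : ↥V₂) ≠ ⟨b, hb⟩ := fun h => hab (congrArg Subtype.val h)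
    have e1 := hadj2 ⟨a, ha⟩ ⟨b, hb⟩ hne
    have e2 : (G.induce V₂).Adj ⟨a, ha⟩ ⟨b, hb⟩ ↔ G.Adj a b := SimpleGraph.comap_adj
    rw [e2] at e1
    rw [hw2 a b ha hb hab, hu₂, cnt_transfer w2 ⟨a, ha⟩ ⟨b, hb⟩]
    exact e1
  -- cross adjacency
  have adj3 : ∀ a b : V, (ha : a ∈ V₁) → (hb : b ∈ V₂) →
      (G.Adj a b ↔ pattern11Count (w.filter (pf a b)) ≤ k) := by
    intro a b ha hb
    by_cases hcase : a = x ∧ b = y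
    · rw [hcase.1, hcase.2]
      exact iff_of_true hxy (by rw [hwxy]; omega)
    · refine iff_of_false (fun hA => hcase (hsep a ha b hb hA)) ?_
      have := hwcross a b ha hb hcase
      omega
  refine ⟨w, fun v => hwcov v (memVV v), ?_⟩
  intro a b hab
  show G.Adj a b ↔ pattern11Count (w.filter (pf a b)) ≤ k
  rcases memVV a with ha | ha <;> rcases memVV b with hb | hb
  · exact adj1 a b ha hb hab
  · exact adj3 a b ha hb
  · rw [G.adj_comm, pf_comm]
    exact adj3 b a hb ha
  · exact adj2 a b ha hb hab
end
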